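/- arXiv:1909.10107 — 4 statements merged into one kernel-verified Lean document; each statement's English description precedes it below -/
import Mathlib

section
/- Let L1 and L2 be bounded linear operators on X = C(cl(Ω), ℝ^m). Assume that L1φ ≥ L2φ for every φ ∈ X₊, that L2 is a positive compact operator (L2 X₊ ⊆ X₊), and that the spectral radius r(L2) is positive. Then r(L1) ≥ r(L2). -/
open Filter Topology

section aux
variable {K : Type*} [TopologicalSpace K] {m : ℕ}

noncomputable def pPart (φ : C(K, EuclideanSpace ℝ (Fin m))) :
    C(K, EuclideanSpace ℝ (Fin m)) :=
  ⟨fun x => (EuclideanSpace.equiv (Fin m) ℝ).symm (fun i => max (φ x i) 0), by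
    refine (EuclideanSpace.equiv (Fin m) ℝ).symm.continuous.comp ?_
    exact continuous_pi fun i =>
      ((EuclideanSpace.proj i).continuous.comp φ.continuous).max continuous_const⟩

lemma pPart_apply (φ : C(K, EuclideanSpace ℝ (Fin m))) (x : K) (i : Fin m) :
    pPart φ x i = max (φ x i) 0 := rfl

lemma pPart_nonneg (φ : C(K, EuclideanSpace ℝ (Fin m))) (x : K) (i : Fin m) :
    0 ≤ pPart φ x i := le_max_right _ _

lemma pPart_sub (φ : C(K, EuclideanSpace ℝ (Fin m))) :
    pPart φ - pPart (-φ) = φ := by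
  ext x i
  simp [pPart_apply, max_zero_sub_max_neg_zero_eq_self]

lemma euclid_norm_mono {a b : EuclideanSpace ℝ (Fin m)}
    (h : ∀ i, |a i| ≤ |b i|) : ‖a‖ ≤ ‖b‖ := by
  rw [EuclideanSpace.norm_eq, EuclideanSpace.norm_eq]
  refine Real.sqrt_le_sqrt (Finset.sum_le_sum fun i _ => ?_)
  simp only [Real.norm_eq_abs]
  exact pow_le_pow_left₀ (abs_nonneg _) (h i) 2

lemma pPart_norm_le [CompactSpace K] (φ : C(K, EuclideanSpace ℝ (Fin m))) : ‖pPart φ‖ ≤ ‖φ‖ := by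
  refine (ContinuousMap.norm_le _ (norm_nonneg φ)).2 fun x => ?_
  refine le_trans (euclid_norm_mono fun i => ?_) (φ.norm_coe_le_norm x)
  rw [pPart_apply, abs_of_nonneg (le_max_right _ _)]
  exact max_le (le_abs_self _) (abs_nonneg _)

lemma cmap_norm_mono [CompactSpace K] {f g : C(K, EuclideanSpace ℝ (Fin m))}
    (hf : ∀ x i, 0 ≤ f x i) (hfg : ∀ x i, f x i ≤ g x i) : ‖f‖ ≤ ‖g‖ := by
  refine (ContinuousMap.norm_le f (norm_nonneg g)).2 fun x => ?_
  refine le_trans (euclid_norm_mono fun i => ?_) (g.norm_coe_le_norm x)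
  rw [abs_of_nonneg (hf x i), abs_of_nonneg ((hf x i).trans (hfg x i))]
  exact hfg x i

end aux

/-- Let `L1` and `L2` be bounded linear operators on
`X = C(cl(Ω), ℝ^m)` (with `Ω` a nonempty bounded open subset of `ℝ^N`, so that
`cl(Ω)` is compact and `X` carries the supremum norm).  Assume `L1 φ ≥ L2 φ`
for every `φ ∈ X₊`, that `L2` is a positive compact operator, and that the
spectral radius `r(L2) = lim ‖L2ⁿ‖^{1/n}` is positive.  Then `r(L1) ≥ r(L2)`. -/
theorem stmt0 {N m : ℕ} (hN : 1 ≤ N) (hm : 1 ≤ m)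
    (Ω : Set (EuclideanSpace ℝ (Fin N))) (hΩne : Ω.Nonempty) (hΩopen : IsOpen Ω)
    (hΩbdd : Bornology.IsBounded Ω) [CompactSpace (closure Ω)]
    (L1 L2 : C(closure Ω, EuclideanSpace ℝ (Fin m)) →L[ℝ]
      C(closure Ω, EuclideanSpace ℝ (Fin m)))
    (horder : ∀ φ : C(closure Ω, EuclideanSpace ℝ (Fin m)),
      (∀ x (i : Fin m), 0 ≤ φ x i) → ∀ x (i : Fin m), (L2 φ) x i ≤ (L1 φ) x i)
    (hpos : ∀ φ : C(closure Ω, EuclideanSpace ℝ (Fin m)),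
      (∀ x (i : Fin m), 0 ≤ φ x i) → ∀ x (i : Fin m), 0 ≤ (L2 φ) x i)
    (hcompact : IsCompactOperator L2)
    (r1 r2 : ℝ)
    (hr1 : Tendsto (fun n : ℕ => ‖L1 ^ n‖ ^ ((n : ℝ)⁻¹)) atTop (𝓝 r1))
    (hr2 : Tendsto (fun n : ℕ => ‖L2 ^ n‖ ^ ((n : ℝ)⁻¹)) atTop (𝓝 r2))
    (hr2pos : 0 < r2) :
    r2 ≤ r1 := by
  -- Key induction: for φ in the cone, 0 ≤ L2ⁿφ ≤ L1ⁿφ.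
  have key : ∀ n : ℕ, ∀ φ : C(closure Ω, EuclideanSpace ℝ (Fin m)),
      (∀ x i, 0 ≤ φ x i) →
      (∀ x i, 0 ≤ ((L2 ^ n) φ) x i) ∧ (∀ x i, ((L2 ^ n) φ) x i ≤ ((L1 ^ n) φ) x i) := by
    intro n
    induction n with
    | zero =>
      intro φ hφ
      simp only [pow_zero, ContinuousLinearMap.one_apply]
      exact ⟨hφ, fun x i => le_refl _⟩
    | succ n ih =>
      intro φ hφ
      obtain ⟨hψ, hle⟩ := ih φ hφ
      set ψ := (L2 ^ n) φ with hψdef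
      set χ := (L1 ^ n) φ with hχdef
      have hχ : ∀ x i, 0 ≤ χ x i := fun x i => (hψ x i).trans (hle x i)
      have hsub : ∀ x i, 0 ≤ (χ - ψ) x i := by
        intro x i
        have : (χ - ψ) x i = χ x i - ψ x i := rfl
        rw [this]; linarith [hle x i]
      have e2 : (L2 ^ (n + 1)) φ = L2 ψ := by
        rw [pow_succ' L2 n]; rfl
      have e1 : (L1 ^ (n + 1)) φ = L1 χ := by
        rw [pow_succ' L1 n]; rfl
      rw [e1, e2]
      constructor
      · exact hpos ψ hψ
      · intro x i
        have h1 : L2 ψ x i ≤ L2 χ x i := by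
          have h := hpos (χ - ψ) hsub x i
          rw [map_sub] at h
          have he : (L2 χ - L2 ψ) x i = L2 χ x i - L2 ψ x i := rfl
          rw [he] at h
          linarith
        exact h1.trans (horder χ hχ x i)
  -- Norm bound: ‖L2ⁿ‖ ≤ 2‖L1ⁿ‖
  have bound : ∀ n : ℕ, ‖L2 ^ n‖ ≤ 2 * ‖L1 ^ n‖ := by
    intro n
    refine ContinuousLinearMap.opNorm_le_bound _ (by positivity) fun φ => ?_
    have hdec : (L2 ^ n) φ = (L2 ^ n) (pPart φ) - (L2 ^ n) (pPart (-φ)) := by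
      conv_lhs => rw [← pPart_sub φ]
      rw [map_sub]
    obtain ⟨hp1, hp2⟩ := key n (pPart φ) (pPart_nonneg φ)
    obtain ⟨hn1, hn2⟩ := key n (pPart (-φ)) (pPart_nonneg (-φ))
    calc ‖(L2 ^ n) φ‖ ≤ ‖(L2 ^ n) (pPart φ)‖ + ‖(L2 ^ n) (pPart (-φ))‖ := by
          rw [hdec]; exact norm_sub_le _ _
      _ ≤ ‖(L1 ^ n) (pPart φ)‖ + ‖(L1 ^ n) (pPart (-φ))‖ :=
          add_le_add (cmap_norm_mono hp1 hp2) (cmap_norm_mono hn1 hn2)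
      _ ≤ ‖L1 ^ n‖ * ‖pPart φ‖ + ‖L1 ^ n‖ * ‖pPart (-φ)‖ :=
          add_le_add (ContinuousLinearMap.le_opNorm _ _) (ContinuousLinearMap.le_opNorm _ _)
      _ ≤ ‖L1 ^ n‖ * ‖φ‖ + ‖L1 ^ n‖ * ‖φ‖ := by
          have h1 := pPart_norm_le φ
          have h2 : ‖pPart (-φ)‖ ≤ ‖φ‖ := by
            simpa using pPart_norm_le (-φ)
          exact add_le_add (mul_le_mul_of_nonneg_left h1 (ContinuousLinearMap.opNorm_nonneg _))
            (mul_le_mul_of_nonneg_left h2 (ContinuousLinearMap.opNorm_nonneg _))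
      _ = 2 * ‖L1 ^ n‖ * ‖φ‖ := by ring
  -- Take nth roots and pass to the limit
  have hineq : ∀ n : ℕ, ‖L2 ^ n‖ ^ ((n : ℝ)⁻¹) ≤
      (2 : ℝ) ^ ((n : ℝ)⁻¹) * ‖L1 ^ n‖ ^ ((n : ℝ)⁻¹) := by
    intro n
    have he : (0 : ℝ) ≤ (n : ℝ)⁻¹ := by positivity
    calc ‖L2 ^ n‖ ^ ((n : ℝ)⁻¹) ≤ (2 * ‖L1 ^ n‖) ^ ((n : ℝ)⁻¹) :=
          Real.rpow_le_rpow (ContinuousLinearMap.opNorm_nonneg _) (bound n) he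
      _ = (2 : ℝ) ^ ((n : ℝ)⁻¹) * ‖L1 ^ n‖ ^ ((n : ℝ)⁻¹) :=
          Real.mul_rpow (by norm_num) (ContinuousLinearMap.opNorm_nonneg _)
  have h2 : Tendsto (fun n : ℕ => (2 : ℝ) ^ ((n : ℝ)⁻¹)) atTop (𝓝 1) := by
    have hcont : ContinuousAt (fun x : ℝ => (2 : ℝ) ^ x) 0 :=
      Real.continuousAt_const_rpow (by norm_num)
    have := hcont.tendsto.comp tendsto_inv_atTop_nhds_zero_nat
    simpa [Function.comp_def, Real.rpow_zero] using this
  have hprod : Tendsto (fun n : ℕ => (2 : ℝ) ^ ((n : ℝ)⁻¹) * ‖L1 ^ n‖ ^ ((n : ℝ)⁻¹))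
      atTop (𝓝 (1 * r1)) := h2.mul hr1
  have := le_of_tendsto_of_tendsto' hr2 hprod hineq
  linarith
end

section
/- Let Ω ⊆ ℝ^N be a nonempty bounded open set and let ν₁,…,ν_m, γ₁,…,γ_m, β₁,…,β_m, λ, b be continuous strictly positive real-valued functions on cl(Ω). Let α ∈ [0,1], h(N) := N^{−α}, and S̃ := (∫_Ω λ dx)/(∫_Ω b dx). Define m×m real matrices V̌ and F̌ by: V̌_{ii} = ∫_Ω (ν_i + γ_i) dx for 1 ≤ i ≤ m; V̌_{i,i−1} = −∫_Ω ν_{i−1} dx for 2 ≤ i ≤ m; V̌_{ij} = 0 otherwise; F̌_{1j} = S̃ h(S̃) ∫_Ω β_j dx for 1 ≤ j ≤ m; and F̌_{ij} = 0 for i ≥ 2. Then V̌ is invertible, the number σ := ( Σ_{j=1}^m (∫_Ω β_j dx · Π_{k=1}^{j−1} ∫_Ω ν_k dx) / Π_{k=1}^{j} ∫_Ω (ν_k + γ_k) dx ) · S̃ h(S̃) is positive, σ is the unique positive eigenvalue of V̌⁻¹F̌, and the spectral radius r(V̌⁻¹F̌) equals σ. -/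
open MeasureTheory

/-- The spectral radius of a real square matrix: the maximum modulus of the
complex roots of its characteristic polynomial (expressed as an `sSup`). -/
noncomputable def matSpecRad {m : ℕ} (A : Matrix (Fin m) (Fin m) ℝ) : ℝ :=
  sSup {t : ℝ | ∃ μ : ℂ, ((A.map Complex.ofReal).charpoly).IsRoot μ ∧ t = ‖μ‖}

open Polynomial in
lemma charpoly_eval_rank_one {m : ℕ} (hm : 1 ≤ m) (u v : Fin m → ℂ) (z : ℂ) (hz : z ≠ 0) :
    Polynomial.eval z (Matrix.of fun i j => u i * v j : Matrix (Fin m) (Fin m) ℂ).charpoly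
      = z ^ (m - 1) * (z - ∑ i, u i * v i) := by
  set M : Matrix (Fin m) (Fin m) ℂ := Matrix.of fun i j => u i * v j with hM
  have h1 : Polynomial.eval z M.charpoly = ((Matrix.charmatrix M).map (Polynomial.eval z)).det := by
    rw [Matrix.charpoly, ← Polynomial.coe_evalRingHom, RingHom.map_det]; rfl
  have h2 : (Matrix.charmatrix M).map (Polynomial.eval z)
      = z • (1 + Matrix.replicateCol Unit (fun i => -(z⁻¹ * u i)) * Matrix.replicateRow Unit v) := by
    ext i j
    by_cases h : i = j
    · subst h
      simp [Matrix.charmatrix_apply_eq, Matrix.mul_apply, Matrix.one_apply, hM]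
      field_simp
      ring
    · simp [Matrix.charmatrix_apply_ne _ _ _ h, Matrix.mul_apply, Matrix.one_apply_ne h, hM]
      field_simp
  rw [h1, h2, Matrix.det_smul, Matrix.det_one_add_replicateCol_mul_replicateRow, Fintype.card_fin]
  obtain ⟨t, rfl⟩ : ∃ t, m = t + 1 := ⟨m - 1, (Nat.succ_pred_eq_of_pos hm).symm⟩
  simp only [dotProduct, Nat.add_sub_cancel]
  have hs : (∑ i, v i * -(z⁻¹ * u i)) = -(z⁻¹ * ∑ i, u i * v i) := by
    rw [Finset.mul_sum, ← Finset.sum_neg_distrib]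
    exact Finset.sum_congr rfl fun i _ => by ring
  rw [hs, pow_succ]
  field_simp
  ring


/-- For the averaged next generation matrices `V̌`, `F̌` of the
staged progression model (0-based indices: Lean index `i` corresponds to math
index `i+1`), `V̌` is invertible, the number `σ` is positive, `σ` is the unique
positive eigenvalue of `V̌⁻¹ F̌`, and `r(V̌⁻¹ F̌) = σ`.  Here
`S̃ = (∫_Ω λ)/(∫_Ω b)` and `h(S̃) = S̃^{−α}`. -/
theorem stmt5 {N m : ℕ} (hN : 1 ≤ N) (hm : 1 ≤ m)
    (Ω : Set (EuclideanSpace ℝ (Fin N))) (hΩne : Ω.Nonempty) (hΩopen : IsOpen Ω)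
    (hΩbdd : Bornology.IsBounded Ω)
    (ν γ β : ℕ → EuclideanSpace ℝ (Fin N) → ℝ)
    (lam b : EuclideanSpace ℝ (Fin N) → ℝ)
    (hνc : ∀ i < m, ContinuousOn (ν i) (closure Ω))
    (hνp : ∀ i < m, ∀ x ∈ closure Ω, 0 < ν i x)
    (hγc : ∀ i < m, ContinuousOn (γ i) (closure Ω))
    (hγp : ∀ i < m, ∀ x ∈ closure Ω, 0 < γ i x)
    (hβc : ∀ i < m, ContinuousOn (β i) (closure Ω))
    (hβp : ∀ i < m, ∀ x ∈ closure Ω, 0 < β i x)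
    (hlamc : ContinuousOn lam (closure Ω)) (hlamp : ∀ x ∈ closure Ω, 0 < lam x)
    (hbc : ContinuousOn b (closure Ω)) (hbp : ∀ x ∈ closure Ω, 0 < b x)
    (α : ℝ) (hα : α ∈ Set.Icc (0 : ℝ) 1)
    (S : ℝ) (hS : S = (∫ x in Ω, lam x) / (∫ x in Ω, b x))
    (Vc Fc : Matrix (Fin m) (Fin m) ℝ)
    (hVc : ∀ i j : Fin m, Vc i j =
      if i = j then ∫ x in Ω, (ν i x + γ i x)
      else if (j : ℕ) + 1 = (i : ℕ) then -∫ x in Ω, ν j x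
      else 0)
    (hFc : ∀ i j : Fin m, Fc i j =
      if (i : ℕ) = 0 then S * S ^ (-α) * ∫ x in Ω, β j x else 0)
    (σ : ℝ)
    (hσ : σ = (∑ j : Fin m,
        ((∫ x in Ω, β j x) * ∏ k ∈ Finset.range j, ∫ x in Ω, ν k x) /
          ∏ k ∈ Finset.range ((j : ℕ) + 1), ∫ x in Ω, (ν k x + γ k x)) *
      (S * S ^ (-α))) :
    Vc.det ≠ 0 ∧ 0 < σ ∧
    (((Vc⁻¹ * Fc).map Complex.ofReal).charpoly).IsRoot (σ : ℂ) ∧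
    (∀ μ : ℝ, 0 < μ →
      (((Vc⁻¹ * Fc).map Complex.ofReal).charpoly).IsRoot (μ : ℂ) → μ = σ) ∧
    matSpecRad (Vc⁻¹ * Fc) = σ := by
  classical
  have hK : IsCompact (closure Ω) := hΩbdd.isCompact_closure
  have hμpos : 0 < volume Ω := hΩopen.measure_pos volume hΩne
  -- positivity of integrals of positive continuous functions
  have key : ∀ f : EuclideanSpace ℝ (Fin N) → ℝ, ContinuousOn f (closure Ω) →
      (∀ x ∈ closure Ω, 0 < f x) → 0 < ∫ x in Ω, f x := by
    intro f hfc hfp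
    have hint : IntegrableOn f Ω := (hfc.integrableOn_compact hK).mono_set subset_closure
    have hnn : 0 ≤ᵐ[volume.restrict Ω] f :=
      (ae_restrict_iff' hΩopen.measurableSet).2 (Filter.Eventually.of_forall
        fun x hx => (hfp x (subset_closure hx)).le)
    rw [setIntegral_pos_iff_support_of_nonneg_ae hnn hint]
    exact lt_of_lt_of_le hμpos (measure_mono fun x hx => ⟨(hfp x (subset_closure hx)).ne', hx⟩)
  have hn : ∀ k, k < m → 0 < ∫ x in Ω, ν k x := fun k hk => key _ (hνc k hk) (hνp k hk)
  have hd : ∀ k, k < m → 0 < ∫ x in Ω, (ν k x + γ k x) := fun k hk =>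
    key _ ((hνc k hk).add (hγc k hk)) (fun x hx => add_pos (hνp k hk x hx) (hγp k hk x hx))
  have hb : ∀ k, k < m → 0 < ∫ x in Ω, β k x := fun k hk => key _ (hβc k hk) (hβp k hk)
  have hSpos : 0 < S := hS ▸ div_pos (key _ hlamc hlamp) (key _ hbc hbp)
  set c : ℝ := S * S ^ (-α) with hc_def
  have hcpos : 0 < c := mul_pos hSpos (Real.rpow_pos_of_pos hSpos _)
  -- products
  have hP : ∀ j ≤ m, 0 < ∏ k ∈ Finset.range j, ∫ x in Ω, ν k x := by
    intro j hj
    exact Finset.prod_pos fun k hk => hn k (lt_of_lt_of_le (Finset.mem_range.1 hk) hj)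
  have hQ : ∀ j ≤ m, 0 < ∏ k ∈ Finset.range j, ∫ x in Ω, (ν k x + γ k x) := by
    intro j hj
    exact Finset.prod_pos fun k hk => hd k (lt_of_lt_of_le (Finset.mem_range.1 hk) hj)
  -- the candidate for Vc⁻¹ * Fc
  set W : Matrix (Fin m) (Fin m) ℝ := Matrix.of (fun i j : Fin m =>
      ((∏ k ∈ Finset.range (i:ℕ), ∫ x in Ω, ν k x) /
        ∏ k ∈ Finset.range ((i:ℕ)+1), ∫ x in Ω, (ν k x + γ k x)) *
      (c * ∫ x in Ω, β j x)) with hW_def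
  have hWapp : ∀ i j : Fin m, W i j =
      ((∏ k ∈ Finset.range (i:ℕ), ∫ x in Ω, ν k x) /
        ∏ k ∈ Finset.range ((i:ℕ)+1), ∫ x in Ω, (ν k x + γ k x)) *
      (c * ∫ x in Ω, β j x) := fun i j => rfl
  -- Vc is lower triangular with positive determinant
  have hdet : Vc.det = ∏ i, Vc i i := by
    apply Matrix.det_of_lowerTriangular
    intro i j hij
    have hij' : (i:ℕ) < (j:ℕ) := hij
    rw [hVc, if_neg (by exact fun h => absurd (congrArg Fin.val h) (by omega)),
      if_neg (by omega)]
  have hdetpos : 0 < Vc.det := by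
    rw [hdet]
    refine Finset.prod_pos fun i _ => ?_
    rw [hVc, if_pos rfl]
    exact hd i i.isLt
  -- Vc * W = Fc
  have hVW : Vc * W = Fc := by
    ext i j
    rw [Matrix.mul_apply]
    have hterm : ∀ k : Fin m, Vc i k * W k j =
        (if i = k then (∫ x in Ω, (ν i x + γ i x)) * W i j else 0) +
        (if (k:ℕ)+1 = (i:ℕ) then (-∫ x in Ω, ν k x) * W k j else 0) := by
      intro k
      rw [hVc]
      by_cases h1 : i = k
      · subst h1; simp
      · by_cases h2 : (k:ℕ)+1 = (i:ℕ)
        · simp [h1, h2]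
        · simp [h1, h2]
    rw [Finset.sum_congr rfl fun k _ => hterm k, Finset.sum_add_distrib,
      Finset.sum_ite_eq, if_pos (Finset.mem_univ i)]
    rcases Nat.eq_zero_or_eq_succ_pred (i:ℕ) with h0 | hsucc
    · -- i = 0
      have hz : ∀ k : Fin m, ¬ ((k:ℕ)+1 = (i:ℕ)) := fun k => by omega
      rw [Finset.sum_eq_zero fun k _ => if_neg (hz k), add_zero, hWapp, hFc, if_pos h0, h0]
      have hd0 : (∫ x in Ω, (ν 0 x + γ 0 x)) ≠ 0 := (hd 0 hm).ne'
      simp only [Finset.prod_range_zero, Finset.prod_range_one]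
      rw [h0] at *
      field_simp
      simp only [zero_add, Finset.prod_range_one]
      exact mul_div_cancel_left₀ _ hd0
    · -- i = t + 1
      set t := (i:ℕ) - 1 with ht_def
      have hit : (i:ℕ) = t + 1 := hsucc
      have htm : t < m := by omega
      have hk0 : ((⟨t, htm⟩ : Fin m):ℕ) + 1 = (i:ℕ) := by simp [hit]
      rw [Finset.sum_eq_single (⟨t, htm⟩ : Fin m)
        (fun k _ hk => if_neg (fun hc => hk (Fin.ext (by omega))))
        (fun h => absurd (Finset.mem_univ _) h), if_pos hk0, hFc,
        if_neg (by omega), hWapp, hWapp]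
      have e1 : (∏ k ∈ Finset.range ((i:ℕ)+1), ∫ x in Ω, (ν k x + γ k x))
          = (∏ k ∈ Finset.range (i:ℕ), ∫ x in Ω, (ν k x + γ k x)) * ∫ x in Ω, (ν i x + γ i x) := by
        rw [Finset.prod_range_succ]
      have e2 : (∏ k ∈ Finset.range (i:ℕ), ∫ x in Ω, ν k x)
          = (∏ k ∈ Finset.range t, ∫ x in Ω, ν k x) * ∫ x in Ω, ν t x := by
        rw [hit, Finset.prod_range_succ]
      have e3 : (∏ k ∈ Finset.range (((⟨t, htm⟩ : Fin m):ℕ)+1), ∫ x in Ω, (ν k x + γ k x))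
          = ∏ k ∈ Finset.range (i:ℕ), ∫ x in Ω, (ν k x + γ k x) := by
        simp [hit]
      have e4 : (∏ k ∈ Finset.range ((⟨t, htm⟩ : Fin m):ℕ), ∫ x in Ω, ν k x)
          = ∏ k ∈ Finset.range t, ∫ x in Ω, ν k x := rfl
      have hQi : (∏ k ∈ Finset.range (i:ℕ), ∫ x in Ω, (ν k x + γ k x)) ≠ 0 :=
        (hQ _ (le_of_lt i.isLt)).ne'
      have hdi : (∫ x in Ω, (ν i x + γ i x)) ≠ 0 := (hd i i.isLt).ne'
      rw [e1, e2, e3, e4]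
      field_simp
      ring
  -- conclusions
  have hUnit : IsUnit Vc.det := isUnit_iff_ne_zero.2 hdetpos.ne'
  have hinv : Vc⁻¹ * Fc = W := by
    rw [← hVW, ← Matrix.mul_assoc, Matrix.nonsing_inv_mul Vc hUnit, Matrix.one_mul]
  haveI : Nonempty (Fin m) := ⟨⟨0, hm⟩⟩
  have hσpos : 0 < σ := by
    rw [hσ]
    refine mul_pos (Finset.sum_pos (fun j _ => div_pos
      (mul_pos (hb j j.isLt) (hP j (le_of_lt j.isLt))) (hQ _ j.isLt)) Finset.univ_nonempty) hcpos
  set u : Fin m → ℂ := fun i => (((∏ k ∈ Finset.range (i:ℕ), ∫ x in Ω, ν k x) /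
        ∏ k ∈ Finset.range ((i:ℕ)+1), ∫ x in Ω, (ν k x + γ k x) : ℝ) : ℂ) with hu
  set v : Fin m → ℂ := fun j => ((c * ∫ x in Ω, β j x : ℝ) : ℂ) with hv
  have hmap : (Vc⁻¹ * Fc).map Complex.ofReal = Matrix.of (fun i j => u i * v j) := by
    rw [hinv]
    ext i j
    simp only [Matrix.map_apply, Matrix.of_apply, hWapp, hu, hv, Complex.ofReal_mul]
  have hsum : (∑ i, u i * v i) = (σ:ℂ) := by
    have hσ' : σ = ∑ i : Fin m, ((∏ k ∈ Finset.range (i:ℕ), ∫ x in Ω, ν k x) /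
        ∏ k ∈ Finset.range ((i:ℕ)+1), ∫ x in Ω, (ν k x + γ k x)) * (c * ∫ x in Ω, β i x) := by
      rw [hσ, Finset.sum_mul]
      refine Finset.sum_congr rfl fun j _ => ?_
      rw [div_eq_mul_inv, div_eq_mul_inv]; ring
    rw [hσ']
    simp only [hu, hv]
    push_cast
    rfl
  have heval : ∀ z : ℂ, z ≠ 0 →
      Polynomial.eval z (((Vc⁻¹ * Fc).map Complex.ofReal).charpoly)
        = z ^ (m-1) * (z - (σ:ℂ)) := by
    intro z hz
    rw [hmap, charpoly_eval_rank_one hm u v z hz, hsum]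
  have hσC : ((σ:ℂ)) ≠ 0 := Complex.ofReal_ne_zero.2 hσpos.ne'
  refine ⟨hdetpos.ne', hσpos, ?_, ?_, ?_⟩
  · show Polynomial.eval _ _ = 0
    rw [heval _ hσC]; simp
  · intro μ hμ hroot
    have hμC : ((μ:ℂ)) ≠ 0 := Complex.ofReal_ne_zero.2 hμ.ne'
    have hroot' : Polynomial.eval (μ:ℂ) (((Vc⁻¹ * Fc).map Complex.ofReal).charpoly) = 0 := hroot
    rw [heval _ hμC] at hroot'
    rcases mul_eq_zero.1 hroot' with h | h
    · exact absurd h (pow_ne_zero _ hμC)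
    · exact_mod_cast sub_eq_zero.1 h
  · rw [matSpecRad]
    apply IsGreatest.csSup_eq
    constructor
    · refine ⟨(σ:ℂ), ?_, ?_⟩
      · show Polynomial.eval _ _ = 0
        rw [heval _ hσC]; simp
      · rw [Complex.norm_real, Real.norm_of_nonneg hσpos.le]
    · rintro t ⟨μ, hroot, rfl⟩
      by_cases hz : μ = 0
      · simpa [hz] using hσpos.le
      · have hroot' : Polynomial.eval μ (((Vc⁻¹ * Fc).map Complex.ofReal).charpoly) = 0 := hroot
        rw [heval _ hz] at hroot'
        rcases mul_eq_zero.1 hroot' with h | h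
        · exact absurd h (pow_ne_zero _ hz)
        · rw [sub_eq_zero.1 h, Complex.norm_real, Real.norm_of_nonneg hσpos.le]
end

section
/- Let m ≥ 1, let d₁,…,d_m and ν₁,…,ν_{m−1} be positive real numbers, and let b₁,…,b_m be nonnegative real numbers. Define the m×m real matrices V and F by: V_{ii} = d_i, V_{i,i−1} = −ν_{i−1} for 2 ≤ i ≤ m, V_{ij} = 0 otherwise; F_{1j} = b_j for 1 ≤ j ≤ m, and F_{ij} = 0 for i ≥ 2. Set σ := Σ_{j=1}^m b_j (Π_{k=1}^{j−1} ν_k)/(Π_{k=1}^{j} d_k). Then every row of FV⁻¹ except the first is zero, the (1,1)-entry of FV⁻¹ equals σ, the eigenvalues of FV⁻¹ are exactly σ and 0 (the characteristic polynomial is λ^{m−1}(λ − σ) up to sign), and the spectral radius of V⁻¹F equals σ. -/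
open Polynomial

lemma charpoly_conj_aux {n : ℕ} (A P Q : Matrix (Fin n) (Fin n) ℝ)
    (h1 : Q * P = 1) : (Q * A * P).charpoly = A.charpoly := by
  have hQP : Q.map (C : ℝ →+* ℝ[X]) * P.map (C : ℝ →+* ℝ[X]) = 1 := by
    rw [← Matrix.map_mul, h1, Matrix.map_one _ (map_zero _) (map_one _)]
  have key : (Q * A * P).charmatrix =
      Q.map (C : ℝ →+* ℝ[X]) * A.charmatrix * P.map (C : ℝ →+* ℝ[X]) := by
    unfold Matrix.charmatrix
    rw [Matrix.mul_sub, Matrix.sub_mul]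
    congr 1
    · rw [← (Matrix.scalar_commute (X : ℝ[X]) (Commute.all _) (Q.map (C : ℝ →+* ℝ[X]))).eq,
        Matrix.mul_assoc, hQP, Matrix.mul_one]
    · simp only [RingHom.mapMatrix_apply, Matrix.map_mul]
  have hdet : (Q.map (C : ℝ →+* ℝ[X])).det * (P.map (C : ℝ →+* ℝ[X])).det = 1 := by
    rw [← Matrix.det_mul, hQP, Matrix.det_one]
  rw [Matrix.charpoly, key, Matrix.det_mul, Matrix.det_mul, Matrix.charpoly]
  calc (Q.map (C : ℝ →+* ℝ[X])).det * A.charmatrix.det * (P.map (C : ℝ →+* ℝ[X])).det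
      = (Q.map (C : ℝ →+* ℝ[X])).det * (P.map (C : ℝ →+* ℝ[X])).det * A.charmatrix.det := by ring
    _ = A.charmatrix.det := by rw [hdet, one_mul]

/-- With `V` lower bidiagonal (`V_{ii} = d_i`,
`V_{i,i−1} = −ν_{i−1}`) and `F` having first row `(b₁,…,b_m)` and all other rows
zero (0-based indices: Lean index `i` corresponds to math index `i+1`), set
`σ := Σ_j b_j (Π_{k=1}^{j−1} ν_k)/(Π_{k=1}^{j} d_k)`.  Then every row of `F V⁻¹`
except the first is zero, `(F V⁻¹)_{11} = σ`, the characteristic polynomial of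
`F V⁻¹` is `λ^{m−1}(λ − σ)` (so the eigenvalues are exactly `σ` and `0`), and
the spectral radius of `V⁻¹ F` equals `σ`. -/
theorem stmt7 {m : ℕ} (hm : 1 ≤ m) (d ν b : ℕ → ℝ)
    (hd : ∀ i < m, 0 < d i) (hν : ∀ i, i + 1 < m → 0 < ν i)
    (hb : ∀ i < m, 0 ≤ b i)
    (V F : Matrix (Fin m) (Fin m) ℝ)
    (hV : ∀ i j : Fin m, V i j =
      if i = j then d i
      else if (j : ℕ) + 1 = (i : ℕ) then -ν j
      else 0)
    (hF : ∀ i j : Fin m, F i j = if (i : ℕ) = 0 then b j else 0)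
    (σ : ℝ)
    (hσ : σ = ∑ j : Fin m,
      b j * (∏ k ∈ Finset.range j, ν k) / ∏ k ∈ Finset.range ((j : ℕ) + 1), d k) :
    (∀ i : Fin m, (i : ℕ) ≠ 0 → ∀ j : Fin m, (F * V⁻¹) i j = 0) ∧
    (F * V⁻¹) ⟨0, hm⟩ ⟨0, hm⟩ = σ ∧
    (F * V⁻¹).charpoly = Polynomial.X ^ (m - 1) * (Polynomial.X - Polynomial.C σ) ∧
    matSpecRad (V⁻¹ * F) = σ := by
  classical
  set W : Matrix (Fin m) (Fin m) ℝ := Matrix.of fun i j =>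
    if (j : ℕ) ≤ (i : ℕ) then
      (∏ k ∈ Finset.Ico (j : ℕ) (i : ℕ), ν k) / (∏ k ∈ Finset.Icc (j : ℕ) (i : ℕ), d k)
    else 0 with hWdef
  have hWapp : ∀ i j : Fin m, W i j = if (j : ℕ) ≤ (i : ℕ) then
      (∏ k ∈ Finset.Ico (j : ℕ) (i : ℕ), ν k) / (∏ k ∈ Finset.Icc (j : ℕ) (i : ℕ), d k)
    else 0 := fun i j => rfl
  have hQpos : ∀ a c : ℕ, c < m → (0:ℝ) < ∏ k ∈ Finset.Icc a c, d k :=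
    fun a c hc => Finset.prod_pos fun k hk => hd k ((Finset.mem_Icc.mp hk).2.trans_lt hc)
  -- V * W = 1
  have hVW : V * W = 1 := by
    ext i j
    rw [Matrix.mul_apply, Matrix.one_apply]
    have hsplit : ∀ k : Fin m, V i k * W k j =
        (if i = k then d (i : ℕ) * W k j else 0) +
        (if (k : ℕ) + 1 = (i : ℕ) then (-ν (k : ℕ)) * W k j else 0) := by
      intro k
      rw [hV]
      by_cases h1 : i = k
      · subst h1
        simp
      · by_cases h2 : (k : ℕ) + 1 = (i : ℕ) <;> simp [h1, h2]
    rw [Finset.sum_congr rfl fun k _ => hsplit k, Finset.sum_add_distrib,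
      Finset.sum_ite_eq Finset.univ i (fun k => d (i : ℕ) * W k j), if_pos (Finset.mem_univ i)]
    rcases Nat.eq_zero_or_pos (i : ℕ) with h0 | hpos
    · rw [Finset.sum_eq_zero (fun k _ => by rw [if_neg (by omega)]), add_zero]
      by_cases hji : j = i
      · subst hji
        rw [hWapp]
        rw [if_pos le_rfl, Finset.Ico_self, Finset.Icc_self, Finset.prod_empty,
          Finset.prod_singleton, if_pos rfl]
        rw [mul_one_div, div_self (hd _ (Fin.is_lt _)).ne']
      · have : ¬ ((j : ℕ) ≤ (i : ℕ)) := by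
          intro h; exact hji (Fin.ext (by omega))
        rw [hWapp, if_neg this, mul_zero, if_neg (fun h => hji h.symm)]
    · obtain ⟨n, hn⟩ : ∃ n, (i : ℕ) = n + 1 := ⟨(i : ℕ) - 1, by omega⟩
      have hnm : n < m := by omega
      set i' : Fin m := ⟨n, hnm⟩ with hi'
      have hsum2 : (∑ k : Fin m, if (k : ℕ) + 1 = (i : ℕ) then (-ν (k : ℕ)) * W k j else 0)
          = (-ν n) * W i' j := by
        rw [Finset.sum_eq_single i']
        · rw [if_pos (by simp [hi', hn])]
        · intro k _ hk
          rw [if_neg (by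
            intro h
            exact hk (Fin.ext (by simp [hi']; omega)))]
        · intro h; exact absurd (Finset.mem_univ i') h
      rw [hsum2]
      have hdn1 : d (n + 1) ≠ 0 := (hd _ (by omega)).ne'
      rcases lt_trichotomy (j : ℕ) (i : ℕ) with hji | hji | hji
      · -- j ≤ n
        have hjn : (j : ℕ) ≤ n := by omega
        rw [if_neg (by intro h; subst h; omega)]
        rw [hWapp, hWapp, if_pos (by omega), if_pos (by simp [hi']; omega)]
        simp only [hi', hn]
        rw [Finset.prod_Ico_succ_top hjn, Finset.prod_Icc_succ_top (by omega)]
        have hQ : (∏ k ∈ Finset.Icc (j : ℕ) n, d k) ≠ 0 := (hQpos _ n (by omega)).ne'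
        field_simp
        ring
      · -- j = i
        have hij : i = j := Fin.ext (by omega)
        rw [if_pos hij, hWapp, hWapp, if_pos (by omega), if_neg (by simp [hi']; omega)]
        have : (j : ℕ) = (i : ℕ) := by omega
        rw [this, Finset.Ico_self, Finset.Icc_self, Finset.prod_empty, Finset.prod_singleton]
        rw [hn, mul_one_div, div_self hdn1, mul_zero, add_zero]
      · -- j > i
        rw [if_neg (by intro h; subst h; omega),
          hWapp, hWapp, if_neg (by omega), if_neg (by simp [hi']; omega)]
        ring
  have hVinv : V⁻¹ = W := Matrix.inv_eq_right_inv hVW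
  have hWV : W * V = 1 := mul_eq_one_comm.mp hVW
  -- Part 1
  have part1 : ∀ i : Fin m, (i : ℕ) ≠ 0 → ∀ j : Fin m, (F * V⁻¹) i j = 0 := by
    intro i hi j
    rw [Matrix.mul_apply]
    exact Finset.sum_eq_zero fun k _ => by rw [hF, if_neg hi, zero_mul]
  -- Part 2
  have part2 : (F * V⁻¹) ⟨0, hm⟩ ⟨0, hm⟩ = σ := by
    rw [Matrix.mul_apply, hVinv, hσ]
    apply Finset.sum_congr rfl
    intro k _
    rw [hF, hWapp]
    simp only [Fin.val_mk, if_pos rfl, Nat.zero_le, if_pos]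
    rw [← Finset.range_eq_Ico, ← Finset.Ico_add_one_right_eq_Icc, ← Finset.range_eq_Ico, mul_div_assoc]
  -- Part 3
  have part3 : (F * V⁻¹).charpoly = X ^ (m - 1) * (X - C σ) := by
    have htri : (F * V⁻¹).BlockTriangular id := by
      intro i j hij
      have hlt : (j : ℕ) < (i : ℕ) := hij
      exact part1 i (by omega) j
    rw [Matrix.charpoly_of_upperTriangular _ htri]
    have hz : (⟨0, hm⟩ : Fin m) ∈ Finset.univ := Finset.mem_univ _
    rw [← Finset.mul_prod_erase Finset.univ _ hz, part2]
    have hrest : ∀ i ∈ Finset.univ.erase (⟨0, hm⟩ : Fin m),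
        (X - C ((F * V⁻¹) i i)) = (X : ℝ[X]) := by
      intro i hi
      have : (i : ℕ) ≠ 0 := by
        intro h
        exact (Finset.mem_erase.mp hi).1 (Fin.ext h)
      rw [part1 i this i, map_zero, sub_zero]
    rw [Finset.prod_congr rfl hrest, Finset.prod_const, Finset.card_erase_of_mem hz,
      Finset.card_univ, Fintype.card_fin]
    ring
  -- σ nonneg
  have hσnn : 0 ≤ σ := by
    rw [hσ]
    apply Finset.sum_nonneg
    intro j _
    apply div_nonneg
    · apply mul_nonneg (hb _ j.is_lt)
      exact Finset.prod_nonneg fun k hk => le_of_lt (hν k (by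
        have := Finset.mem_range.mp hk
        have := j.is_lt
        omega))
    · exact le_of_lt (Finset.prod_pos fun k hk => hd k (by
        have := Finset.mem_range.mp hk
        have := j.is_lt
        omega))
  -- Part 4
  have hconj : (V⁻¹ * F).charpoly = (F * V⁻¹).charpoly := by
    have he : V⁻¹ * F = V⁻¹ * (F * V⁻¹) * V := by
      simp only [Matrix.mul_assoc, hVinv, hWV, Matrix.mul_one]
    rw [he]
    exact charpoly_conj_aux _ _ _ (by rw [hVinv]; exact hWV)
  have hcc : ((V⁻¹ * F).map Complex.ofReal).charpoly
      = X ^ (m - 1) * (X - C (σ : ℂ)) := by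
    have : (V⁻¹ * F).map Complex.ofReal = (V⁻¹ * F).map (Complex.ofRealHom : ℝ →+* ℂ) := rfl
    rw [this, Matrix.charpoly_map, hconj, part3, Polynomial.map_mul, Polynomial.map_pow,
      Polynomial.map_sub, Polynomial.map_X, Polynomial.map_C, Complex.ofRealHom_eq_coe]
  have habs : ‖(σ : ℂ)‖ = σ := by
    rw [Complex.norm_real, Real.norm_of_nonneg hσnn]
  have hrootσ : ((((V⁻¹ * F)).map Complex.ofReal).charpoly).IsRoot ((σ : ℝ) : ℂ) := by
    rw [hcc]
    simp [Polynomial.IsRoot]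
  have hub : ∀ t ∈ {t : ℝ | ∃ μ : ℂ, (((V⁻¹ * F).map Complex.ofReal).charpoly).IsRoot μ ∧
      t = ‖μ‖}, t ≤ σ := by
    rintro t ⟨μ, hμ, rfl⟩
    rw [hcc] at hμ
    simp only [Polynomial.IsRoot, Polynomial.eval_mul, Polynomial.eval_pow, Polynomial.eval_sub,
      Polynomial.eval_X, Polynomial.eval_C, mul_eq_zero, pow_eq_zero_iff', sub_eq_zero] at hμ
    rcases hμ with ⟨hμ0, -⟩ | hμσ
    · simp [hμ0, hσnn]
    · rw [hμσ, habs]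
  have hmem : σ ∈ {t : ℝ | ∃ μ : ℂ, (((V⁻¹ * F).map Complex.ofReal).charpoly).IsRoot μ ∧
      t = ‖μ‖} := ⟨(σ : ℂ), hrootσ, habs.symm⟩
  have part4 : matSpecRad (V⁻¹ * F) = σ := by
    unfold matSpecRad
    exact le_antisymm (csSup_le ⟨σ, hmem⟩ hub) (le_csSup ⟨σ, hub⟩ hmem)
  exact ⟨part1, part2, part3, part4⟩
end

section
/- Let P and Q be m×m real matrices such that −P has nonnegative off-diagonal entries (i.e., −P is cooperative), Q has nonnegative entries and Q is not the zero matrix, and −P + aQ is irreducible for every a > 0. Define δ̂(M) := max{Re μ : μ ∈ ℂ is an eigenvalue of M} for a square real matrix M. Then the function a ↦ δ̂(−P + aQ) is strictly increasing on (0,∞); that is, for any 0 < a₂ < a₁ one has δ̂(−P + a₂Q) < δ̂(−P + a₁Q). -/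
open Matrix Finset Polynomial

/-- The spectral bound of a real square matrix: the maximum of the real parts
of the complex roots of its characteristic polynomial (as an `sSup`). -/
noncomputable def spectralBound {m : ℕ} (A : Matrix (Fin m) (Fin m) ℝ) : ℝ :=
  sSup {t : ℝ | ∃ μ : ℂ, ((A.map Complex.ofReal).charpoly).IsRoot μ ∧ t = μ.re}

section PerronAux

variable {m : ℕ}



lemma mulVec_apply' (N : Matrix (Fin m) (Fin m) ℝ) (x : Fin m → ℝ) (i : Fin m) :
    N.mulVec x i = ∑ j, N i j * x j := by
  simp [Matrix.mulVec, dotProduct]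

lemma mulVec_nonneg' (N : Matrix (Fin m) (Fin m) ℝ) (hN : ∀ i j, 0 ≤ N i j)
    (x : Fin m → ℝ) (hx : ∀ i, 0 ≤ x i) : ∀ i, 0 ≤ N.mulVec x i := by
  intro i
  rw [mulVec_apply']
  exact Finset.sum_nonneg fun j _ => mul_nonneg (hN i j) (hx j)

lemma mulVec_mono' (N : Matrix (Fin m) (Fin m) ℝ) (hN : ∀ i j, 0 ≤ N i j)
    (x y : Fin m → ℝ) (hxy : ∀ i, x i ≤ y i) : ∀ i, N.mulVec x i ≤ N.mulVec y i := by
  intro i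
  rw [mulVec_apply', mulVec_apply']
  exact Finset.sum_le_sum fun j _ => mul_le_mul_of_nonneg_left (hxy j) (hN i j)

lemma pow_entries_nonneg (N : Matrix (Fin m) (Fin m) ℝ) (hN : ∀ i j, 0 ≤ N i j) (k : ℕ) :
    ∀ i j, 0 ≤ ((1 + N) ^ k) i j := by
  induction k with
  | zero => intro i j; simp [Matrix.one_apply]; positivity
  | succ k ih =>
    intro i j
    rw [pow_succ, Matrix.mul_apply]
    refine Finset.sum_nonneg fun l _ => mul_nonneg (ih i l) ?_
    simp only [Matrix.add_apply, Matrix.one_apply]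
    have := hN l j
    by_cases h : l = j
    · subst h; simp; linarith [hN l l]
    · simpa [h] using hN l j

/-- support of a vector as a finset -/
noncomputable def vsupp (x : Fin m → ℝ) : Finset (Fin m) := Finset.univ.filter (fun i => 0 < x i)

lemma mem_vsupp {x : Fin m → ℝ} {i : Fin m} : i ∈ vsupp x ↔ 0 < x i := by
  simp [vsupp]

lemma pow_mulVec_pos (N : Matrix (Fin m) (Fin m) ℝ) (hN : ∀ i j, 0 ≤ N i j)
    (hcol : ∀ s : Finset (Fin m), s.Nonempty → s ≠ Finset.univ →
      ∃ i ∉ s, ∃ j ∈ s, N i j ≠ 0)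
    (x : Fin m → ℝ) (hx : ∀ i, 0 ≤ x i) (hx0 : x ≠ 0) :
    ∀ i, 0 < ((1 + N) ^ (m - 1)).mulVec x i := by
  have key : ∀ k : ℕ, ∀ z : Fin m → ℝ, (∀ i, 0 ≤ z i) → (vsupp z).Nonempty →
      min m ((vsupp z).card + k) ≤ (vsupp (((1 + N) ^ k).mulVec z)).card := by
    intro k
    induction k with
    | zero =>
      intro z hz hzne
      have : (vsupp z).card ≤ m := by
        simpa using Finset.card_le_univ (vsupp z)
      simp only [pow_zero, Matrix.one_mulVec]
      omega
    | succ k ih =>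
      intro z hz hzne
      set y := (1 + N).mulVec z with hy
      have hyz : ∀ i, y i = z i + N.mulVec z i := by
        intro i
        rw [hy, Matrix.add_mulVec, Matrix.one_mulVec]
        rfl
      have hynn : ∀ i, 0 ≤ y i := fun i => by
        rw [hyz i]; exact add_nonneg (hz i) (mulVec_nonneg' N hN z hz i)
      have hsub : vsupp z ⊆ vsupp y := by
        intro i hi
        rw [mem_vsupp] at hi ⊢
        rw [hyz i]
        have := mulVec_nonneg' N hN z hz i
        linarith
      have hrw : ((1 + N) ^ (k + 1)).mulVec z = ((1 + N) ^ k).mulVec y := by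
        rw [hy, Matrix.mulVec_mulVec, ← pow_succ]
      have hyne : (vsupp y).Nonempty := hzne.mono hsub
      have hcard : (vsupp y).card ≤ m := by
        simpa using Finset.card_le_univ (vsupp y)
      have h2 := ih y hynn hyne
      rw [hrw]
      -- enough: min m ((vsupp z).card + 1) ≤ (vsupp y).card  ∨  vsupp y has card m
      by_cases hu : vsupp z = Finset.univ
      · have : (vsupp y).card = m := by
          have : vsupp y = Finset.univ := Finset.univ_subset_iff.mp (hu ▸ hsub)
          simp [this]
        omega
      · obtain ⟨i, hi, j, hj, hNij⟩ := hcol (vsupp z) hzne hu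
        have hjpos : 0 < z j := mem_vsupp.mp hj
        have hNijpos : 0 < N i j := lt_of_le_of_ne (hN i j) (Ne.symm hNij)
        have hivy : i ∈ vsupp y := by
          rw [mem_vsupp, hyz i]
          have h1 : N i j * z j ≤ N.mulVec z i := by
            rw [mulVec_apply']
            exact Finset.single_le_sum (fun l _ => mul_nonneg (hN i l) (hz l))
              (Finset.mem_univ j)
          have := mul_pos hNijpos hjpos
          linarith [hz i]
        have hss : vsupp z ⊂ vsupp y := ⟨hsub, fun h => hi (h hivy)⟩
        have := Finset.card_lt_card hss
        omega
  intro i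
  obtain ⟨i0, hi0⟩ : ∃ i, x i ≠ 0 := Function.ne_iff.mp hx0
  have hne : (vsupp x).Nonempty :=
    ⟨i0, mem_vsupp.mpr (lt_of_le_of_ne (hx i0) (Ne.symm hi0))⟩
  have h1 : 1 ≤ (vsupp x).card := Finset.card_pos.mpr hne
  have h2 := key (m - 1) x hx hne
  have hm1 : 1 ≤ m := by
    rcases Nat.eq_zero_or_pos m with h | h
    · exact absurd (Fin.pos i0) (by omega)
    · exact h
  have hcard : (vsupp (((1 + N) ^ (m - 1)).mulVec x)).card = m := by
    have : (vsupp (((1 + N) ^ (m - 1)).mulVec x)).card ≤ m := by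
      simpa using Finset.card_le_univ (vsupp (((1 + N) ^ (m - 1)).mulVec x))
    omega
  have huniv : vsupp (((1 + N) ^ (m - 1)).mulVec x) = Finset.univ := by
    apply Finset.eq_univ_of_card
    simpa using hcard
  exact mem_vsupp.mp (huniv ▸ Finset.mem_univ i)


lemma perron_exists (N : Matrix (Fin m) (Fin m) ℝ) (hm : 1 ≤ m)
    (hN : ∀ i j, 0 ≤ N i j)
    (hcol : ∀ s : Finset (Fin m), s.Nonempty → s ≠ Finset.univ →
      ∃ i ∉ s, ∃ j ∈ s, N i j ≠ 0) :
    ∃ r : ℝ, ∃ x : Fin m → ℝ, (∀ i, 0 < x i) ∧ N.mulVec x = r • x := by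
  haveI : Nonempty (Fin m) := ⟨⟨0, hm⟩⟩
  set T : Matrix (Fin m) (Fin m) ℝ := (1 + N) ^ (m - 1) with hT
  have hTnn : ∀ i j, 0 ≤ T i j := pow_entries_nonneg N hN (m - 1)
  have hTpos : ∀ x : Fin m → ℝ, (∀ i, 0 ≤ x i) → x ≠ 0 → ∀ i, 0 < T.mulVec x i :=
    pow_mulVec_pos N hN hcol
  have hcomm : ∀ v : Fin m → ℝ, T.mulVec (N.mulVec v) = N.mulVec (T.mulVec v) := by
    intro v
    have hc : Commute N T := ((Commute.one_right N).add_right (Commute.refl N)).pow_right (m - 1)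
    rw [Matrix.mulVec_mulVec, Matrix.mulVec_mulVec, hc.eq]
  -- the Collatz-Wielandt function
  set L : (Fin m → ℝ) → ℝ :=
    fun x => Finset.univ.inf' Finset.univ_nonempty (fun i => N.mulVec x i / x i) with hL
  have L_le : ∀ x : Fin m → ℝ, ∀ i, L x ≤ N.mulVec x i / x i :=
    fun x i => Finset.inf'_le _ (Finset.mem_univ i)
  have L_bound : ∀ x : Fin m → ℝ, (∀ i, 0 < x i) → ∀ i, L x * x i ≤ N.mulVec x i := by
    intro x hx i
    exact (le_div_iff₀ (hx i)).mp (L_le x i)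
  have L_lt : ∀ x : Fin m → ℝ, (∀ i, 0 < x i) → ∀ r : ℝ,
      (∀ i, r * x i < N.mulVec x i) → r < L x := by
    intro x hx r h
    rw [hL]
    rw [Finset.lt_inf'_iff]
    intro i _
    exact (lt_div_iff₀ (hx i)).mpr (h i)
  have L_ge : ∀ x : Fin m → ℝ, (∀ i, 0 < x i) → ∀ r : ℝ,
      (∀ i, r * x i ≤ N.mulVec x i) → r ≤ L x := by
    intro x hx r h
    rw [hL]
    rw [Finset.le_inf'_iff]
    intro i _
    exact (le_div_iff₀ (hx i)).mpr (h i)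
  have L_smul : ∀ x : Fin m → ℝ, ∀ c : ℝ, 0 < c → L (c • x) = L x := by
    intro x c hc
    rw [hL]
    simp only [Matrix.mulVec_smul]
    congr 1
    funext i
    simp only [Pi.smul_apply, smul_eq_mul]
    rw [mul_div_mul_left _ _ hc.ne']
  -- step inequality
  have L_step : ∀ x : Fin m → ℝ, (∀ i, 0 < x i) → L x ≤ L (T.mulVec x) := by
    intro x hx
    have hx0 : x ≠ 0 := by
      intro h
      exact absurd (congrFun h (Classical.arbitrary (Fin m)))
        (ne_of_gt (hx _))
    have hTx : ∀ i, 0 < T.mulVec x i := hTpos x (fun i => (hx i).le) hx0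
    apply L_ge _ hTx
    intro i
    have h1 : ∀ j, (L x • x) j ≤ N.mulVec x j := by
      intro j; simpa using L_bound x hx j
    have h2 := mulVec_mono' T hTnn _ _ h1 i
    rw [Matrix.mulVec_smul] at h2
    rw [hcomm x] at h2
    simpa using h2
  -- compact set K
  set Δ : Set (Fin m → ℝ) := stdSimplex ℝ (Fin m) with hΔ
  set K : Set (Fin m → ℝ) := (fun y => T.mulVec y) '' Δ with hK
  have contT : Continuous (fun y : Fin m → ℝ => T.mulVec y) := by
    apply continuous_pi
    intro i
    simp only [mulVec_apply']
    exact continuous_finset_sum _ fun j _ => (continuous_const.mul (continuous_apply j))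
  have hKcpt : IsCompact K := (isCompact_stdSimplex ℝ (Fin m)).image contT
  have hΔne : Δ.Nonempty := by
    refine ⟨fun _ => (m : ℝ)⁻¹, ⟨fun i => by positivity, ?_⟩⟩
    simp
    rw [mul_inv_cancel₀]
    exact_mod_cast Nat.one_le_iff_ne_zero.mp hm
  have hKne : K.Nonempty := hΔne.image _
  have hKpos : ∀ x ∈ K, ∀ i, 0 < x i := by
    rintro x ⟨y, hy, rfl⟩ i
    have hy0 : y ≠ 0 := by
      intro h
      have := hy.2
      rw [h] at this
      simp at this
    exact hTpos y hy.1 hy0 i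
  have hcont : ContinuousOn L K := by
    intro x hx
    apply ContinuousAt.continuousWithinAt
    apply ContinuousAt.finset_inf'_apply
    intro i _
    apply ContinuousAt.div
    · apply Continuous.continuousAt
      simp only [mulVec_apply']
      exact continuous_finset_sum _ fun j _ => (continuous_const.mul (continuous_apply j))
    · exact (continuous_apply i).continuousAt
    · exact (hKpos x hx i).ne'
  obtain ⟨xs, hxsK, hmax⟩ := hKcpt.exists_isMaxOn hKne hcont
  have hxspos : ∀ i, 0 < xs i := hKpos xs hxsK
  set r : ℝ := L xs with hr
  -- key: L x ≤ r for every strictly positive x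
  have keyineq : ∀ x : Fin m → ℝ, (∀ i, 0 < x i) → L x ≤ r := by
    intro x hx
    set s : ℝ := ∑ i, x i with hs
    have hspos : 0 < s := Finset.sum_pos (fun i _ => hx i) Finset.univ_nonempty
    set y : Fin m → ℝ := s⁻¹ • x with hy
    have hypos : ∀ i, 0 < y i := fun i => by
      rw [hy]; simpa using mul_pos (inv_pos.mpr hspos) (hx i)
    have hymem : y ∈ Δ := by
      refine ⟨fun i => (hypos i).le, ?_⟩
      rw [hy]
      simp only [Pi.smul_apply, smul_eq_mul, ← Finset.mul_sum]
      rw [← hs, inv_mul_cancel₀ hspos.ne']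
    have h1 : L x = L y := (L_smul x s⁻¹ (inv_pos.mpr hspos)).symm
    have h2 : L y ≤ L (T.mulVec y) := L_step y hypos
    have h3 : L (T.mulVec y) ≤ r := hmax ⟨y, hymem, rfl⟩
    linarith
  have hgeq : ∀ i, r * xs i ≤ N.mulVec xs i := L_bound xs hxspos
  have heq : N.mulVec xs = r • xs := by
    by_contra h
    set z : Fin m → ℝ := N.mulVec xs - r • xs with hz
    have hznn : ∀ i, 0 ≤ z i := by
      intro i; rw [hz]; simp only [Pi.sub_apply, Pi.smul_apply, smul_eq_mul]
      linarith [hgeq i]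
    have hz0 : z ≠ 0 := by
      intro h0
      apply h
      have : N.mulVec xs - r • xs = 0 := h0
      linear_combination (norm := abel) this
    have hw : ∀ i, 0 < T.mulVec z i := hTpos z hznn hz0
    set xx : Fin m → ℝ := T.mulVec xs with hxx
    have hxxpos : ∀ i, 0 < xx i := by
      apply hTpos xs (fun i => (hxspos i).le)
      intro h0
      exact absurd (congrFun h0 (Classical.arbitrary (Fin m))) (ne_of_gt (hxspos _))
    have hwz : ∀ i, r * xx i < N.mulVec xx i := by
      intro i
      have : T.mulVec z = N.mulVec xx - r • xx := by
        rw [hz, Matrix.mulVec_sub, Matrix.mulVec_smul, hcomm xs, hxx]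
      have h2 := hw i
      rw [this] at h2
      simp only [Pi.sub_apply, Pi.smul_apply, smul_eq_mul] at h2
      linarith
    have := L_lt xx hxxpos r hwz
    have := keyineq xx hxxpos
    linarith
  exact ⟨r, xs, hxspos, heq⟩


lemma charpoly_eval_det (A : Matrix (Fin m) (Fin m) ℂ) (μ : ℂ) :
    A.charpoly.eval μ = (μ • 1 - A).det := by
  rw [Matrix.charpoly, ← coe_evalRingHom, RingHom.map_det]
  congr 1
  ext i j
  by_cases h : i = j
  · subst h
    simp [Matrix.charmatrix_apply_eq, Matrix.one_apply]
  · simp [Matrix.charmatrix_apply_ne _ _ _ h, Matrix.one_apply, h]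

lemma isRoot_charpoly_iff (A : Matrix (Fin m) (Fin m) ℂ) (μ : ℂ) :
    A.charpoly.IsRoot μ ↔ ∃ v : Fin m → ℂ, v ≠ 0 ∧ A.mulVec v = μ • v := by
  rw [Polynomial.IsRoot, charpoly_eval_det]
  rw [← Matrix.exists_mulVec_eq_zero_iff]
  constructor
  · rintro ⟨v, hv, h⟩
    refine ⟨v, hv, ?_⟩
    rw [Matrix.sub_mulVec] at h
    have h1 : (μ • (1 : Matrix (Fin m) (Fin m) ℂ)).mulVec v = μ • v := by
      rw [Matrix.smul_mulVec, Matrix.one_mulVec]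
    rw [h1] at h
    have := sub_eq_zero.mp h
    exact this.symm
  · rintro ⟨v, hv, h⟩
    refine ⟨v, hv, ?_⟩
    rw [Matrix.sub_mulVec, Matrix.smul_mulVec, Matrix.one_mulVec, h, sub_self]

/-- a real eigenvalue with a real eigenvector gives a complex charpoly root -/
lemma real_eig_isRoot (A : Matrix (Fin m) (Fin m) ℝ) (r : ℝ) (x : Fin m → ℝ)
    (hx : x ≠ 0) (h : A.mulVec x = r • x) :
    ((A.map Complex.ofReal).charpoly).IsRoot (r : ℂ) := by
  rw [isRoot_charpoly_iff]
  refine ⟨fun i => (x i : ℂ), ?_, ?_⟩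
  · intro h0
    apply hx
    funext i
    have := congrFun h0 i
    simp only [Pi.zero_apply] at this ⊢
    exact_mod_cast this
  · funext i
    have := congrFun h i
    simp only [Matrix.mulVec, dotProduct, Pi.smul_apply, smul_eq_mul] at this ⊢
    simp only [Matrix.map_apply]
    exact_mod_cast congrArg (Complex.ofReal) this


/-- Spectral upper bound from a positive left eigenvector of `A + c•1`. -/
lemma re_le_of_left_eig (A : Matrix (Fin m) (Fin m) ℝ) (c r : ℝ) (y : Fin m → ℝ)
    (hy : ∀ i, 0 < y i)
    (hN : ∀ i j, 0 ≤ (A + c • 1) i j)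
    (heig : (A + c • 1)ᵀ.mulVec y = r • y)
    (μ : ℂ) (hroot : ((A.map Complex.ofReal).charpoly).IsRoot μ) : μ.re ≤ r - c := by
  obtain ⟨v, hv0, hv⟩ := (isRoot_charpoly_iff _ μ).mp hroot
  set N : Matrix (Fin m) (Fin m) ℝ := A + c • 1 with hNdef
  set u : Fin m → ℝ := fun i => ‖v i‖ with hu
  have hunn : ∀ i, 0 ≤ u i := fun i => norm_nonneg _
  -- complexified eigen equation for N
  have hNeig : ∀ i, (∑ j, (N i j : ℂ) * v j) = (μ + c) * v i := by
    intro i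
    have h1 : (∑ j, (A i j : ℂ) * v j) = μ * v i := by
      have := congrFun hv i
      simpa [Matrix.mulVec, dotProduct, Matrix.map_apply] using this
    have h2 : ∀ j, (N i j : ℂ) = (A i j : ℂ) + if i = j then (c : ℂ) else 0 := by
      intro j
      rw [hNdef]
      simp [Matrix.add_apply, Matrix.smul_apply, Matrix.one_apply]
      by_cases h : i = j <;> simp [h]
    calc (∑ j, (N i j : ℂ) * v j)
        = (∑ j, ((A i j : ℂ) * v j + (if i = j then (c:ℂ) else 0) * v j)) := by
          apply Finset.sum_congr rfl; intro j _; rw [h2 j]; ring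
      _ = (∑ j, (A i j : ℂ) * v j) + (∑ j, (if i = j then (c:ℂ) else 0) * v j) := by
          rw [Finset.sum_add_distrib]
      _ = μ * v i + c * v i := by
          rw [h1]; congr 1; simp
      _ = (μ + c) * v i := by ring
  -- entrywise bound
  have key1 : ∀ i, ‖μ + c‖ * u i ≤ ∑ j, N i j * u j := by
    intro i
    have : ‖(μ + c) * v i‖ = ‖μ + c‖ * u i := by
      rw [norm_mul]
    rw [← this, ← hNeig i]
    calc ‖∑ j, (N i j : ℂ) * v j‖
        ≤ ∑ j, ‖(N i j : ℂ) * v j‖ := norm_sum_le _ _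
      _ = ∑ j, N i j * u j := by
          apply Finset.sum_congr rfl
          intro j _
          rw [norm_mul, Complex.norm_real, Real.norm_eq_abs, abs_of_nonneg (hN i j)]
  -- sum against y
  set S : ℝ := ∑ i, y i * u i with hS
  have hSpos : 0 < S := by
    obtain ⟨i0, hi0⟩ : ∃ i, v i ≠ 0 := Function.ne_iff.mp hv0
    have h1 : 0 < y i0 * u i0 :=
      mul_pos (hy i0) (by simpa [hu] using (norm_pos_iff.mpr hi0))
    have h2 : ∀ i ∈ Finset.univ, 0 ≤ y i * u i :=
      fun i _ => mul_nonneg (hy i).le (hunn i)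
    calc (0:ℝ) < y i0 * u i0 := h1
      _ ≤ S := Finset.single_le_sum h2 (Finset.mem_univ i0)
  have key2 : ‖μ + c‖ * S ≤ r * S := by
    calc ‖μ + c‖ * S
        = ∑ i, y i * (‖μ + c‖ * u i) := by
          rw [hS, Finset.mul_sum]; apply Finset.sum_congr rfl; intro i _; ring
      _ ≤ ∑ i, y i * (∑ j, N i j * u j) := by
          apply Finset.sum_le_sum
          intro i _
          exact mul_le_mul_of_nonneg_left (key1 i) (hy i).le
      _ = ∑ j, (∑ i, N i j * y i) * u j := by
          simp_rw [Finset.mul_sum, Finset.sum_mul]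
          rw [Finset.sum_comm]
          apply Finset.sum_congr rfl; intro j _
          apply Finset.sum_congr rfl; intro i _; ring
      _ = ∑ j, (r * y j) * u j := by
          apply Finset.sum_congr rfl
          intro j _
          congr 1
          have := congrFun heig j
          simpa [Matrix.mulVec, dotProduct, Matrix.transpose_apply] using this
      _ = r * S := by
          rw [hS, Finset.mul_sum]; apply Finset.sum_congr rfl; intro i _; ring
  have habs : ‖μ + c‖ ≤ r := le_of_mul_le_mul_right key2 hSpos
  have hre : μ.re + c ≤ ‖μ + c‖ := by
    have := Complex.re_le_norm (μ + c)
    simpa using this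
  linarith

lemma vec_ne_zero_of_pos {x : Fin m → ℝ} (hm : 1 ≤ m) (hx : ∀ i, 0 < x i) : x ≠ 0 := by
  intro h
  exact absurd (congrFun h ⟨0, hm⟩) (ne_of_gt (hx ⟨0, hm⟩))

/-- For a matrix `A` such that `N = A + c•1` is nonnegative and irreducible,
the spectral bound of `A` equals `r - c` where `r` is the common Perron value,
with positive right and left eigenvectors. -/
lemma spectral_eq (A : Matrix (Fin m) (Fin m) ℝ) (hm : 1 ≤ m) (c : ℝ)
    (hN : ∀ i j, 0 ≤ (A + c • 1) i j)
    (hcol : ∀ s : Finset (Fin m), s.Nonempty → s ≠ Finset.univ →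
      ∃ i ∉ s, ∃ j ∈ s, (A + c • 1) i j ≠ 0)
    (hcolT : ∀ s : Finset (Fin m), s.Nonempty → s ≠ Finset.univ →
      ∃ i ∉ s, ∃ j ∈ s, (A + c • 1)ᵀ i j ≠ 0) :
    ∃ r : ℝ, ∃ x y : Fin m → ℝ, (∀ i, 0 < x i) ∧ (∀ i, 0 < y i) ∧
      (A + c • 1).mulVec x = r • x ∧ (A + c • 1)ᵀ.mulVec y = r • y ∧
      spectralBound A = r - c := by
  set N : Matrix (Fin m) (Fin m) ℝ := A + c • 1 with hNdef
  have hNT : ∀ i j, 0 ≤ Nᵀ i j := fun i j => hN j i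
  obtain ⟨r₁, x, hx, hxe⟩ := perron_exists N hm hN hcol
  obtain ⟨r₂, y, hy, hye⟩ := perron_exists Nᵀ hm hNT hcolT
  -- A-eigen equations
  have hAx : A.mulVec x = (r₁ - c) • x := by
    have h1 : N.mulVec x = A.mulVec x + c • x := by
      rw [hNdef, Matrix.add_mulVec, Matrix.smul_mulVec, Matrix.one_mulVec]
    rw [h1] at hxe
    funext i
    have := congrFun hxe i
    simp only [Pi.add_apply, Pi.smul_apply, smul_eq_mul] at this ⊢
    linarith
  have hATn : Aᵀ + c • 1 = Nᵀ := by
    rw [hNdef, Matrix.transpose_add, Matrix.transpose_smul, Matrix.transpose_one]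
  have hAy : Aᵀ.mulVec y = (r₂ - c) • y := by
    have h1 : Nᵀ.mulVec y = Aᵀ.mulVec y + c • y := by
      rw [← hATn, Matrix.add_mulVec, Matrix.smul_mulVec, Matrix.one_mulVec]
    rw [h1] at hye
    funext i
    have := congrFun hye i
    simp only [Pi.add_apply, Pi.smul_apply, smul_eq_mul] at this ⊢
    linarith
  have hx0 : x ≠ 0 := vec_ne_zero_of_pos hm hx
  have hy0 : y ≠ 0 := vec_ne_zero_of_pos hm hy
  -- r₁ = r₂
  have hroot₁ : ((A.map Complex.ofReal).charpoly).IsRoot ((r₁ - c : ℝ) : ℂ) :=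
    real_eig_isRoot A (r₁ - c) x hx0 hAx
  have hroot₂T : ((Aᵀ.map Complex.ofReal).charpoly).IsRoot ((r₂ - c : ℝ) : ℂ) :=
    real_eig_isRoot Aᵀ (r₂ - c) y hy0 hAy
  have h12 : r₁ ≤ r₂ := by
    have := re_le_of_left_eig A c r₂ y hy hN hye ((r₁ - c : ℝ) : ℂ) hroot₁
    simp only [Complex.ofReal_re] at this
    linarith
  have h21 : r₂ ≤ r₁ := by
    have hNTe : (Aᵀ + c • 1)ᵀ.mulVec x = r₁ • x := by
      rw [hATn, Matrix.transpose_transpose]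
      exact hxe
    have hNT' : ∀ i j, 0 ≤ (Aᵀ + c • 1) i j := by rw [hATn]; exact hNT
    have := re_le_of_left_eig Aᵀ c r₁ x hx hNT' hNTe ((r₂ - c : ℝ) : ℂ) hroot₂T
    simp only [Complex.ofReal_re] at this
    linarith
  have hr : r₁ = r₂ := le_antisymm h12 h21
  subst hr
  -- spectral bound computation
  refine ⟨r₁, x, y, hx, hy, hxe, hye, ?_⟩
  have hbound : ∀ t ∈ {t : ℝ | ∃ μ : ℂ, ((A.map Complex.ofReal).charpoly).IsRoot μ ∧ t = μ.re},
      t ≤ r₁ - c := by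
    rintro t ⟨μ, hμ, rfl⟩
    exact re_le_of_left_eig A c r₁ y hy hN hye μ hμ
  have hmem : (r₁ - c) ∈ {t : ℝ | ∃ μ : ℂ, ((A.map Complex.ofReal).charpoly).IsRoot μ ∧ t = μ.re} :=
    ⟨((r₁ - c : ℝ) : ℂ), hroot₁, by simp⟩
  rw [spectralBound]
  exact le_antisymm (csSup_le ⟨_, hmem⟩ hbound) (le_csSup ⟨r₁ - c, hbound⟩ hmem)

end PerronAux

/-- Let `P`, `Q` be `m×m` real matrices with `−P` cooperative
(nonnegative off-diagonal entries), `Q` nonnegative and nonzero, and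
`−P + aQ` irreducible for every `a > 0`.  Then `a ↦ δ̂(−P + aQ)` is strictly
increasing on `(0,∞)`: for `0 < a₂ < a₁`,
`δ̂(−P + a₂Q) < δ̂(−P + a₁Q)`. -/
theorem stmt8 {m : ℕ} (hm : 1 ≤ m) (P Q : Matrix (Fin m) (Fin m) ℝ)
    (hP : ∀ i j : Fin m, i ≠ j → 0 ≤ (-P) i j)
    (hQ : ∀ i j : Fin m, 0 ≤ Q i j) (hQ0 : Q ≠ 0)
    (hirr : ∀ a : ℝ, 0 < a → ∀ s : Finset (Fin m), s.Nonempty → s ≠ Finset.univ →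
      ∃ i ∈ s, ∃ j, j ∉ s ∧ (-P + a • Q) i j ≠ 0) :
    ∀ a₁ a₂ : ℝ, 0 < a₂ → a₂ < a₁ →
      spectralBound (-P + a₂ • Q) < spectralBound (-P + a₁ • Q) := by
  intro a₁ a₂ ha₂ hlt
  have ha₁ : 0 < a₁ := ha₂.trans hlt
  set M : ℝ → Matrix (Fin m) (Fin m) ℝ := fun a => -P + a • Q with hM
  set c : ℝ := 1 + (∑ i, |M a₁ i i|) + (∑ i, |M a₂ i i|) with hc
  -- nonnegativity of N a := M a + c • 1 for a ∈ {a₁, a₂} with a > 0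
  have hMoff : ∀ a : ℝ, 0 < a → ∀ i j : Fin m, i ≠ j → 0 ≤ M a i j := by
    intro a ha i j hij
    rw [hM]
    simp only [Matrix.add_apply, Matrix.neg_apply, Matrix.smul_apply, smul_eq_mul]
    have h1 := hP i j hij
    simp only [Matrix.neg_apply] at h1
    have h2 := mul_nonneg ha.le (hQ i j)
    linarith
  have habs : ∀ a ∈ ({a₁, a₂} : Set ℝ), ∀ i : Fin m, |M a i i| ≤ c - 1 := by
    intro a hmem i
    have h1 : (0:ℝ) ≤ ∑ i, |M a₁ i i| := Finset.sum_nonneg fun i _ => abs_nonneg _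
    have h2 : (0:ℝ) ≤ ∑ i, |M a₂ i i| := Finset.sum_nonneg fun i _ => abs_nonneg _
    rcases hmem with h | h
    · subst h
      have := Finset.single_le_sum (f := fun i => |M a i i|)
        (fun i _ => abs_nonneg _) (Finset.mem_univ i)
      rw [hc]; linarith
    · simp only [Set.mem_singleton_iff] at h
      subst h
      have := Finset.single_le_sum (f := fun i => |M a i i|)
        (fun i _ => abs_nonneg _) (Finset.mem_univ i)
      rw [hc]; linarith
  have hNnn : ∀ a ∈ ({a₁, a₂} : Set ℝ), 0 < a → ∀ i j : Fin m, 0 ≤ (M a + c • 1) i j := by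
    intro a hmem ha i j
    by_cases h : i = j
    · subst h
      simp only [Matrix.add_apply, Matrix.smul_apply, Matrix.one_apply_eq, smul_eq_mul, mul_one]
      have := habs a hmem i
      have := abs_le.mp this
      linarith [(abs_le.mp (habs a hmem i)).1]
    · simp only [Matrix.add_apply, Matrix.smul_apply, Matrix.one_apply_ne h, smul_eq_mul, mul_zero,
        add_zero]
      exact hMoff a ha i j h
  -- N entries off-diagonal agree with M
  have hNoff : ∀ a : ℝ, ∀ i j : Fin m, i ≠ j → (M a + c • 1) i j = M a i j := by
    intro a i j hij
    simp [Matrix.add_apply, Matrix.smul_apply, Matrix.one_apply_ne hij]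
  -- irreducibility forms
  have hcol : ∀ a : ℝ, 0 < a → ∀ s : Finset (Fin m), s.Nonempty → s ≠ Finset.univ →
      ∃ i ∉ s, ∃ j ∈ s, (M a + c • 1) i j ≠ 0 := by
    intro a ha s hne hnu
    have h1 : (sᶜ : Finset (Fin m)).Nonempty := by
      rw [← Finset.card_pos, Finset.card_compl]
      have h2 : s.card < Fintype.card (Fin m) :=
        lt_of_le_of_ne (Finset.card_le_univ s) (fun h => hnu (Finset.eq_univ_of_card s (by simpa using h)))
      omega
    have h2 : (sᶜ : Finset (Fin m)) ≠ Finset.univ := (Finset.compl_ne_univ_iff_nonempty s).mpr hne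
    obtain ⟨i, hi, j, hj, hij⟩ := hirr a ha sᶜ h1 h2
    rw [Finset.mem_compl] at hi
    have hjs : j ∈ s := by
      by_contra hjs
      exact hj (Finset.mem_compl.mpr hjs)
    have hne' : i ≠ j := fun h => hi (h ▸ hjs)
    exact ⟨i, hi, j, hjs, by rw [hNoff a i j hne']; exact hij⟩
  have hcolT : ∀ a : ℝ, 0 < a → ∀ s : Finset (Fin m), s.Nonempty → s ≠ Finset.univ →
      ∃ i ∉ s, ∃ j ∈ s, (M a + c • 1)ᵀ i j ≠ 0 := by
    intro a ha s hne hnu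
    obtain ⟨i, hi, j, hj, hij⟩ := hirr a ha s hne hnu
    have hne' : i ≠ j := fun h => hj (h ▸ hi)
    refine ⟨j, hj, i, hi, ?_⟩
    rw [Matrix.transpose_apply, hNoff a i j hne']
    exact hij
  -- Perron data
  obtain ⟨r₁, x₁, y₁, hx₁, hy₁, hxe₁, hye₁, hs₁⟩ :=
    spectral_eq (M a₁) hm c (hNnn a₁ (by simp) ha₁) (hcol a₁ ha₁) (hcolT a₁ ha₁)
  obtain ⟨r₂, x₂, y₂, hx₂, hy₂, hxe₂, hye₂, hs₂⟩ :=
    spectral_eq (M a₂) hm c (hNnn a₂ (by simp) ha₂) (hcol a₂ ha₂) (hcolT a₂ ha₂)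
  rw [hs₁, hs₂]
  have : r₂ < r₁ := by
    set N₁ : Matrix (Fin m) (Fin m) ℝ := M a₁ + c • 1 with hN₁
    set N₂ : Matrix (Fin m) (Fin m) ℝ := M a₂ + c • 1 with hN₂
    have hdiff : ∀ i j, N₁ i j - N₂ i j = (a₁ - a₂) * Q i j := by
      intro i j
      rw [hN₁, hN₂, hM]
      simp only [Matrix.add_apply, Matrix.neg_apply, Matrix.smul_apply, smul_eq_mul]
      ring
    set S : ℝ := ∑ i, y₁ i * x₂ i with hS
    have hSpos : 0 < S := by
      have h0 : ∀ i ∈ Finset.univ, (0:ℝ) ≤ y₁ i * x₂ i :=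
        fun i _ => (mul_pos (hy₁ i) (hx₂ i)).le
      have h1 : 0 < y₁ ⟨0, hm⟩ * x₂ ⟨0, hm⟩ := mul_pos (hy₁ _) (hx₂ _)
      calc (0:ℝ) < y₁ ⟨0, hm⟩ * x₂ ⟨0, hm⟩ := h1
        _ ≤ S := Finset.single_le_sum h0 (Finset.mem_univ _)
    set D : ℝ := ∑ i, ∑ j, y₁ i * ((N₁ i j - N₂ i j) * x₂ j) with hD
    have hDpos : 0 < D := by
      obtain ⟨i0, j0, hij0⟩ : ∃ i j, Q i j ≠ 0 := by
        by_contra h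
        push_neg at h
        exact hQ0 (by ext i j; simpa using h i j)
      have hQpos : 0 < Q i0 j0 := lt_of_le_of_ne (hQ i0 j0) (Ne.symm hij0)
      have hterm : ∀ i ∈ Finset.univ, (0:ℝ) ≤ ∑ j, y₁ i * ((N₁ i j - N₂ i j) * x₂ j) := by
        intro i _
        apply Finset.sum_nonneg
        intro j _
        rw [hdiff i j]
        have : 0 ≤ (a₁ - a₂) * Q i j := mul_nonneg (by linarith) (hQ i j)
        exact mul_nonneg (hy₁ i).le (mul_nonneg this (hx₂ j).le)
      have hmain : 0 < ∑ j, y₁ i0 * ((N₁ i0 j - N₂ i0 j) * x₂ j) := by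
        have hterm2 : ∀ j ∈ Finset.univ, (0:ℝ) ≤ y₁ i0 * ((N₁ i0 j - N₂ i0 j) * x₂ j) := by
          intro j _
          rw [hdiff i0 j]
          exact mul_nonneg (hy₁ i0).le
            (mul_nonneg (mul_nonneg (by linarith) (hQ i0 j)) (hx₂ j).le)
        have hmain2 : 0 < y₁ i0 * ((N₁ i0 j0 - N₂ i0 j0) * x₂ j0) := by
          rw [hdiff i0 j0]
          have := mul_pos (sub_pos.mpr hlt) hQpos
          exact mul_pos (hy₁ i0) (mul_pos this (hx₂ j0))
        calc (0:ℝ) < _ := hmain2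
          _ ≤ _ := Finset.single_le_sum hterm2 (Finset.mem_univ j0)
      calc (0:ℝ) < _ := hmain
        _ ≤ D := Finset.single_le_sum hterm (Finset.mem_univ i0)
    -- D = r₁ * S - r₂ * S
    have hD1 : ∑ i, ∑ j, y₁ i * (N₁ i j * x₂ j) = r₁ * S := by
      rw [Finset.sum_comm]
      have : ∀ j, ∑ i, y₁ i * (N₁ i j * x₂ j) = (N₁ᵀ.mulVec y₁) j * x₂ j := by
        intro j
        simp only [Matrix.mulVec, dotProduct, Matrix.transpose_apply, Finset.sum_mul]
        apply Finset.sum_congr rfl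
        intro i _
        ring
      rw [Finset.sum_congr rfl fun j _ => this j]
      rw [hye₁]
      rw [hS, Finset.mul_sum]
      apply Finset.sum_congr rfl
      intro i _
      simp only [Pi.smul_apply, smul_eq_mul]
      ring
    have hD2 : ∑ i, ∑ j, y₁ i * (N₂ i j * x₂ j) = r₂ * S := by
      have : ∀ i, ∑ j, y₁ i * (N₂ i j * x₂ j) = y₁ i * (N₂.mulVec x₂) i := by
        intro i
        simp only [Matrix.mulVec, dotProduct, Finset.mul_sum]
      rw [Finset.sum_congr rfl fun i _ => this i]
      rw [hxe₂]
      rw [hS, Finset.mul_sum]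
      apply Finset.sum_congr rfl
      intro i _
      simp only [Pi.smul_apply, smul_eq_mul]
      ring
    have hDeq : D = r₁ * S - r₂ * S := by
      rw [hD, ← hD1, ← hD2, ← Finset.sum_sub_distrib]
      apply Finset.sum_congr rfl
      intro i _
      rw [← Finset.sum_sub_distrib]
      apply Finset.sum_congr rfl
      intro j _
      ring
    rw [hDeq] at hDpos
    by_contra h
    push_neg at h
    nlinarith
  linarith
end
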